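/- Let (T, M) be a local domain with residue field k and residue map π : T → k, and let D be an integral domain with fraction field k, viewed as a subring of k. Let S be an overring of D, i.e., a subring of k containing D. If the pullback S ×_k T = π⁻¹(S) is flat as a module over D ×_k T = π⁻¹(D), then S is flat as a D-module. -/

import Mathlib

set_option maxHeartbeats 1000000
set_option synthInstance.maxHeartbeats 400000


/-- Let `(T, M)` be a local domain with residue field `k` and residue map `π`, and `D` a
subring of `k` with fraction field `k`. If for an overring `S` of `D` the pullback
`π⁻¹(S)` is flat as a module over `π⁻¹(D)`, then `S` is flat as a `D`-module. -/
theorem stmt_10 {T k : Type*} [CommRing T] [IsDomain T] [IsLocalRing T] [Field k]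
    (π : T →+* k) (hπ : Function.Surjective π)
    (hker : RingHom.ker π = IsLocalRing.maximalIdeal T)
    (D : Subring k) [IsFractionRing D k]
    (S : Subring k) (hDS : D ≤ S)
    (hflat : @Module.Flat (D.comap π) (S.comap π) _ _
      (RingHom.toAlgebra
        (Subring.inclusion (fun _ hx => hDS hx : D.comap π ≤ S.comap π))).toModule) :
    @Module.Flat D S _ _ (RingHom.toAlgebra (Subring.inclusion hDS)).toModule := by
  set A := D.comap π with hA
  set B := S.comap π with hB
  -- restrictions of π
  let φ : A →+* D := (π.comp A.subtype).codRestrict D (fun x => x.2)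
  let ψ : B →+* S := (π.comp B.subtype).codRestrict S (fun x => x.2)
  have hφsurj : Function.Surjective φ := by
    rintro ⟨d, hd⟩
    obtain ⟨t, ht⟩ := hπ d
    refine ⟨⟨t, Subring.mem_comap.2 (show π t ∈ D from ht.symm ▸ hd)⟩, ?_⟩
    exact Subtype.ext ht
  letI instAB : Algebra A B :=
    RingHom.toAlgebra (Subring.inclusion (fun _ hx => hDS hx : D.comap π ≤ S.comap π))
  letI instAD : Algebra A D := φ.toAlgebra
  letI instDS : Algebra D S := (Subring.inclusion hDS).toAlgebra
  letI instAS : Algebra A S := ((Subring.inclusion hDS).comp φ).toAlgebra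
  letI : IsScalarTower A D S := IsScalarTower.of_algebraMap_eq fun x => rfl
  letI : IsScalarTower A D D := IsScalarTower.of_algebraMap_eq fun x => rfl
  haveI : Module.Flat A B := hflat
  -- the algebra hom `D ⊗[A] B →ₐ[D] S`
  let f : D →ₐ[D] S := Algebra.ofId D S
  let g : B →ₐ[A] S :=
    { toRingHom := ψ
      commutes' := fun a => Subtype.ext rfl }
  let L : TensorProduct A D B →ₐ[D] S :=
    Algebra.TensorProduct.lift f g (fun x y => Commute.all _ _)
  -- every element of the tensor product is a pure tensor `1 ⊗ b`
  have key : ∀ x : TensorProduct A D B, ∃ b : B, x = TensorProduct.tmul A (1 : D) b := by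
    intro x
    induction x using TensorProduct.induction_on with
    | zero => exact ⟨0, by simp⟩
    | tmul d b =>
      obtain ⟨a, ha⟩ := hφsurj d
      refine ⟨a • b, ?_⟩
      rw [← TensorProduct.smul_tmul, ← ha]
      congr 1
      exact Algebra.algebraMap_eq_smul_one a
    | add x y hx hy =>
      obtain ⟨b₁, hb₁⟩ := hx
      obtain ⟨b₂, hb₂⟩ := hy
      exact ⟨b₁ + b₂, by rw [hb₁, hb₂, TensorProduct.tmul_add]⟩
  have hLtmul : ∀ b : B, L (TensorProduct.tmul A (1 : D) b) = ψ b := by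
    intro b
    simp [L, Algebra.TensorProduct.lift_tmul, f, g]
  have hsurj : Function.Surjective L := by
    rintro ⟨s, hs⟩
    obtain ⟨t, ht⟩ := hπ s
    refine ⟨TensorProduct.tmul A (1 : D) ⟨t, Subring.mem_comap.2 (show π t ∈ S from ht.symm ▸ hs)⟩, ?_⟩
    rw [hLtmul]
    exact Subtype.ext ht
  have hinj : Function.Injective L := by
    rw [injective_iff_map_eq_zero]
    intro x hx
    obtain ⟨b, rfl⟩ := key x
    rw [hLtmul] at hx
    have hb0 : π (b : T) = 0 := congrArg Subtype.val hx
    have hbA : (b : T) ∈ A := Subring.mem_comap.2 (by rw [hb0]; exact D.zero_mem)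
    have hb1 : b = (⟨(b : T), hbA⟩ : A) • (1 : B) := by
      apply Subtype.ext
      show (b : T) = (b : T) * 1
      ring
    rw [hb1, ← TensorProduct.smul_tmul]
    have : (⟨(b : T), hbA⟩ : A) • (1 : D) = 0 := by
      rw [← Algebra.algebraMap_eq_smul_one]
      exact Subtype.ext hb0
    rw [this, TensorProduct.zero_tmul]
  exact Module.Flat.of_linearEquiv (R := D) (M := TensorProduct A D B) (N := S)
    (LinearEquiv.ofBijective L.toLinearMap ⟨hinj, hsurj⟩).symm
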